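/- arXiv:2006.07463 — 2 statements merged into one kernel-verified Lean document; each statement's English description precedes it below -/
import Mathlib

section
/- Let m ≥ 1, let F be the (m+1)×(m+1) real block matrix with scalar top-left entry f, top-right row vector b ∈ ℝ^m, bottom-left column vector c ∈ ℝ^m, and bottom-right m×m block D, and let γ ∈ ℝ. Then adj(F − γ·E₀₀) = adj(F) − γ·G, where G is the block matrix with zero top-left scalar, zero top-right row, zero bottom-left column, and bottom-right block adj(D). In particular the first row and first column of the adjugate are unchanged by the perturbation. -/
open Matrix

/-- Perturbing the top-left scalar entry of the block matrix
`F = fromBlocks f b c D` by `-γ` changes the adjugate by `-γ • fromBlocks 0 0 0 (adj D)`;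
in particular the first row and first column of the adjugate are unchanged. -/
theorem adjugate_perturbed_topLeft (m : ℕ) (hm : 1 ≤ m) (f : ℝ)
    (b : Matrix (Fin 1) (Fin m) ℝ) (c : Matrix (Fin m) (Fin 1) ℝ)
    (D : Matrix (Fin m) (Fin m) ℝ) (γ : ℝ)
    (F : Matrix (Fin 1 ⊕ Fin m) (Fin 1 ⊕ Fin m) ℝ)
    (hF : F = Matrix.fromBlocks (Matrix.of fun _ _ => f) b c D) :
    (F - γ • Matrix.single (Sum.inl 0) (Sum.inl 0) (1 : ℝ)).adjugate =
      F.adjugate - γ • Matrix.fromBlocks 0 0 0 D.adjugate := by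
  set A := F - γ • Matrix.single (Sum.inl 0) (Sum.inl 0) (1 : ℝ) with hA
  have hrow : ∀ a, a ≠ Sum.inl 0 → A a = F a := by
    intro a ha
    funext b'
    simp [hA, Matrix.single, Ne.symm ha]
  ext i j
  rw [Matrix.adjugate_apply, Matrix.sub_apply, Matrix.adjugate_apply]
  cases j with
  | inl j0 =>
    have hj0 : j0 = 0 := Subsingleton.elim _ _
    subst hj0
    have heq : A.updateRow (Sum.inl 0) (Pi.single i 1)
        = F.updateRow (Sum.inl 0) (Pi.single i 1) := by
      ext a b'
      by_cases ha : a = Sum.inl 0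
      · subst ha; simp
      · rw [Matrix.updateRow_ne ha, Matrix.updateRow_ne ha, hrow a ha]
    rw [heq]
    cases i <;> simp [Matrix.smul_apply, Matrix.fromBlocks]
  | inr j' =>
    set M := F.updateRow (Sum.inr j') (Pi.single i 1) with hM
    have heq : A.updateRow (Sum.inr j') (Pi.single i 1)
        = M.updateRow (Sum.inl 0) (M (Sum.inl 0) + (-γ) • (Pi.single (Sum.inl 0) 1 : Fin 1 ⊕ Fin m → ℝ)) := by
      ext a b'
      rcases eq_or_ne a (Sum.inl 0) with ha | ha
      · subst ha
        rw [Matrix.updateRow_ne (by simp), Matrix.updateRow_self]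
        rw [hM, Matrix.updateRow_ne (by simp)]
        simp [hA, Matrix.single, Pi.single_apply, eq_comm]
        by_cases hb : b' = Sum.inl 0 <;> simp [hb] <;> ring
      · rcases eq_or_ne a (Sum.inr j') with hb | hb
        · subst hb; simp [hM]
        · rw [Matrix.updateRow_ne hb, Matrix.updateRow_ne ha, hM, Matrix.updateRow_ne hb,
            hrow a ha]
    rw [heq, Matrix.det_updateRow_add, Matrix.det_updateRow_smul, Matrix.updateRow_eq_self]
    have key : (M.updateRow (Sum.inl 0) (Pi.single (Sum.inl 0) 1)).det
        = Matrix.fromBlocks (0 : Matrix (Fin 1) (Fin 1) ℝ) 0 0 D.adjugate i (Sum.inr j') := by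
      cases i with
      | inl i0 =>
        have hi0 : i0 = 0 := Subsingleton.elim _ _
        subst hi0
        rw [Matrix.det_zero_of_row_eq (i := Sum.inl 0) (j := Sum.inr j') (by simp)]
        · simp [Matrix.fromBlocks]
        · rw [Matrix.updateRow_self, Matrix.updateRow_ne (by simp), hM,
            Matrix.updateRow_self]
      | inr i' =>
        have hblock : M.updateRow (Sum.inl 0) (Pi.single (Sum.inl 0) 1)
            = Matrix.fromBlocks 1 0
                (Matrix.of fun k (_ : Fin 1) => if k = j' then 0 else c k 0)
                (D.updateRow j' (Pi.single i' 1)) := by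
          ext a b'
          rcases eq_or_ne a (Sum.inl 0) with ha | ha
          · subst ha
            rw [Matrix.updateRow_self]
            cases b' with
            | inl b0 => simp [Pi.single_apply, Matrix.fromBlocks, Subsingleton.elim b0 0]
            | inr b0 => simp [Pi.single_apply, Matrix.fromBlocks]
          · rw [Matrix.updateRow_ne ha]
            cases a with
            | inl a0 => exact absurd (by simp [Subsingleton.elim a0 0]) ha
            | inr a0 =>
              rcases eq_or_ne a0 j' with h0 | h0
              · subst h0
                rw [hM, Matrix.updateRow_self]
                cases b' with
                | inl b0 => simp [Pi.single_apply, Matrix.fromBlocks]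
                | inr b0 => simp [Pi.single_apply, Matrix.fromBlocks]
              · rw [hM, Matrix.updateRow_ne (by simp [h0]), hF]
                cases b' with
                | inl b0 => simp [Matrix.fromBlocks, h0, Subsingleton.elim b0 0]
                | inr b0 => simp [Matrix.fromBlocks, Matrix.updateRow_ne h0]
        rw [hblock, Matrix.det_fromBlocks_zero₁₂]
        simp [Matrix.fromBlocks, Matrix.adjugate_apply]
    rw [key, Matrix.smul_apply, smul_eq_mul]
    ring
end

section
/- Let G : ℝ → ℝ be positive and nonincreasing on [0, ∞) and long-tailed in the sense that for every fixed y ≥ 0, G(u − y)/G(u) → 1 as u → ∞. Let φ : ℝ → ℝ be nondecreasing with φ(u) → ∞ as u → ∞ and 0 ≤ φ(u) ≤ u for all large u, and suppose G is φ-insensitive: G(u − φ(u))/G(u) → 1 as u → ∞. Let ζ : [0, ∞) → ℝ be nonnegative and Lebesgue integrable, and suppose (∫_{φ(u)}^∞ ζ(y) dy) / G(u) → 0 as u → ∞. Then lim_{u→∞} (∫_0^u G(u − y)·ζ(y) dy) / G(u) = ∫_0^∞ ζ(y) dy < ∞. -/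
open Filter MeasureTheory

/-- Long-tailed insensitivity lemma: if `G` is positive, nonincreasing on `[0,∞)` and
long-tailed, `φ` is a nondecreasing function tending to infinity with `0 ≤ φ u ≤ u`
eventually, `G` is `φ`-insensitive, `ζ` is nonnegative and integrable on `[0,∞)` with
`(∫_{φ u}^∞ ζ) / G u → 0`, then `(∫_0^u G(u - y) ζ(y) dy) / G u → ∫_0^∞ ζ`. -/
theorem heavy_tail_convolution_limit (G φ ζ : ℝ → ℝ)
    (hGpos : ∀ u : ℝ, 0 ≤ u → 0 < G u)
    (hGanti : ∀ u v : ℝ, 0 ≤ u → u ≤ v → G v ≤ G u)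
    (hGlong : ∀ y : ℝ, 0 ≤ y →
      Tendsto (fun u : ℝ => G (u - y) / G u) atTop (nhds 1))
    (hφmono : Monotone φ)
    (hφtop : Tendsto φ atTop atTop)
    (hφbound : ∀ᶠ u in atTop, 0 ≤ φ u ∧ φ u ≤ u)
    (hins : Tendsto (fun u : ℝ => G (u - φ u) / G u) atTop (nhds 1))
    (hζnonneg : ∀ y : ℝ, 0 ≤ y → 0 ≤ ζ y)
    (hζint : IntegrableOn ζ (Set.Ici 0))
    (htail : Tendsto (fun u : ℝ => (∫ y in Set.Ioi (φ u), ζ y) / G u) atTop (nhds 0)) :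
    Tendsto (fun u : ℝ => (∫ y in Set.Icc (0 : ℝ) u, G (u - y) * ζ y) / G u) atTop
      (nhds (∫ y in Set.Ioi (0 : ℝ), ζ y)) := by
  set I : ℝ := ∫ y in Set.Ioi (0 : ℝ), ζ y with hIdef
  -- a globally antitone, positive, bounded version of `G`
  set g : ℝ → ℝ := fun x => G (max x 0) with hgdef
  have hganti : Antitone g := fun x y hxy =>
    hGanti _ _ (le_max_right x 0) (max_le_max hxy le_rfl)
  have hgpos : ∀ x, 0 < g x := fun x => hGpos _ (le_max_right x 0)
  have hgle : ∀ x, g x ≤ G 0 := fun x => hGanti 0 _ le_rfl (le_max_right x 0)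
  have hgmeas : Measurable g := hganti.measurable
  -- integrability of the convolution integrand
  have hint : ∀ u : ℝ, IntegrableOn (fun y => g (u - y) * ζ y) (Set.Ici 0) := by
    intro u
    apply MeasureTheory.Integrable.bdd_mul (c := G 0) hζint
    · exact (hgmeas.comp (measurable_const.sub measurable_id)).aestronglyMeasurable
    · refine Filter.Eventually.of_forall fun y => ?_
      rw [Real.norm_eq_abs, abs_of_pos (hgpos _)]
      exact hgle _
  -- convergence of the truncated integral of ζ
  have hA : Tendsto (fun u : ℝ => ∫ y in Set.Icc 0 (φ u), ζ y) atTop (nhds I) := by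
    have h0 : Tendsto (fun t : ℝ => ∫ y in Set.Icc 0 t, ζ y) atTop (nhds I) := by
      have h1 := MeasureTheory.intervalIntegral_tendsto_integral_Ioi 0
        (hζint.mono_set Set.Ioi_subset_Ici_self) (tendsto_id (x := atTop (α := ℝ)))
      refine h1.congr' ?_
      filter_upwards [eventually_ge_atTop (0 : ℝ)] with t ht
      simp only [id_eq]
      rw [intervalIntegral.integral_of_le ht, MeasureTheory.integral_Ioc_eq_integral_Ioo,
        MeasureTheory.integral_Icc_eq_integral_Ioo]
    exact h0.comp hφtop
  -- the squeeze bounds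
  have key : ∀ᶠ u in atTop,
      (∫ y in Set.Icc 0 (φ u), ζ y) ≤
        (∫ y in Set.Icc (0 : ℝ) u, G (u - y) * ζ y) / G u ∧
      (∫ y in Set.Icc (0 : ℝ) u, G (u - y) * ζ y) / G u ≤
        G (u - φ u) / G u * (∫ y in Set.Icc 0 (φ u), ζ y) +
          G 0 * ((∫ y in Set.Ioi (φ u), ζ y) / G u) := by
    filter_upwards [hφbound] with u hu
    obtain ⟨hφ0, hφu⟩ := hu
    have hu0 : (0 : ℝ) ≤ u := hφ0.trans hφu
    have hGu : 0 < G u := hGpos u hu0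
    set A : ℝ := ∫ y in Set.Icc 0 (φ u), ζ y with hAdef
    set T : ℝ := ∫ y in Set.Ioi (φ u), ζ y with hTdef
    have hcongr : (∫ y in Set.Icc (0 : ℝ) u, G (u - y) * ζ y) =
        ∫ y in Set.Icc (0 : ℝ) u, g (u - y) * ζ y := by
      refine MeasureTheory.setIntegral_congr_fun measurableSet_Icc fun y hy => ?_
      have : max (u - y) 0 = u - y := max_eq_left (by linarith [hy.2])
      simp [hgdef, this]
    have hsplit : Set.Icc (0 : ℝ) u = Set.Icc 0 (φ u) ∪ Set.Ioc (φ u) u :=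
      (Set.Icc_union_Ioc_eq_Icc hφ0 hφu).symm
    have hdisj : Disjoint (Set.Icc (0 : ℝ) (φ u)) (Set.Ioc (φ u) u) := by
      rw [Set.disjoint_left]
      intro x hx1 hx2
      exact absurd hx1.2 (not_le.2 hx2.1)
    have hint1 : IntegrableOn (fun y => g (u - y) * ζ y) (Set.Icc 0 (φ u)) :=
      (hint u).mono_set Set.Icc_subset_Ici_self
    have hint2 : IntegrableOn (fun y => g (u - y) * ζ y) (Set.Ioc (φ u) u) :=
      (hint u).mono_set fun y hy => hφ0.trans hy.1.le
    have hsum : (∫ y in Set.Icc (0 : ℝ) u, g (u - y) * ζ y) =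
        (∫ y in Set.Icc 0 (φ u), g (u - y) * ζ y) +
          ∫ y in Set.Ioc (φ u) u, g (u - y) * ζ y := by
      rw [hsplit]
      exact MeasureTheory.setIntegral_union hdisj measurableSet_Ioc hint1 hint2
    -- ζ integrable on the pieces
    have hζ1 : IntegrableOn ζ (Set.Icc 0 (φ u)) := hζint.mono_set Set.Icc_subset_Ici_self
    have hζ2 : IntegrableOn ζ (Set.Ioi (φ u)) :=
      hζint.mono_set fun y hy => hφ0.trans (le_of_lt hy)
    -- lower bound on the first piece
    have hlow1 : G u * A ≤ ∫ y in Set.Icc 0 (φ u), g (u - y) * ζ y := by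
      rw [hAdef, ← MeasureTheory.integral_const_mul]
      refine MeasureTheory.setIntegral_mono_on (hζ1.const_mul _) hint1 measurableSet_Icc
        fun y hy => ?_
      have hy2 : y ≤ u := hy.2.trans hφu
      have hmax : max (u - y) 0 = u - y := max_eq_left (by linarith)
      have : G u ≤ g (u - y) := by
        rw [hgdef]; simp only [hmax]
        exact hGanti (u - y) u (by linarith) (by linarith [hy.1])
      exact mul_le_mul_of_nonneg_right this (hζnonneg y hy.1)
    -- the second piece is nonnegative
    have hpos2 : 0 ≤ ∫ y in Set.Ioc (φ u) u, g (u - y) * ζ y :=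
      MeasureTheory.setIntegral_nonneg measurableSet_Ioc fun y hy =>
        mul_nonneg (hgpos _).le (hζnonneg y (hφ0.trans hy.1.le))
    -- upper bound on the first piece
    have hup1 : (∫ y in Set.Icc 0 (φ u), g (u - y) * ζ y) ≤ G (u - φ u) * A := by
      rw [hAdef, ← MeasureTheory.integral_const_mul]
      refine MeasureTheory.setIntegral_mono_on hint1 (hζ1.const_mul _) measurableSet_Icc
        fun y hy => ?_
      have hy2 : y ≤ u := hy.2.trans hφu
      have hmax : max (u - y) 0 = u - y := max_eq_left (by linarith)
      have : g (u - y) ≤ G (u - φ u) := by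
        rw [hgdef]; simp only [hmax]
        exact hGanti (u - φ u) (u - y) (by linarith) (by linarith [hy.2])
      exact mul_le_mul_of_nonneg_right this (hζnonneg y hy.1)
    -- upper bound on the second piece
    have hup2 : (∫ y in Set.Ioc (φ u) u, g (u - y) * ζ y) ≤ G 0 * T := by
      have step1 : (∫ y in Set.Ioc (φ u) u, g (u - y) * ζ y) ≤
          ∫ y in Set.Ioc (φ u) u, G 0 * ζ y := by
        refine MeasureTheory.setIntegral_mono_on hint2
          ((hζ2.mono_set Set.Ioc_subset_Ioi_self).const_mul _) measurableSet_Ioc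
          fun y hy => ?_
        exact mul_le_mul_of_nonneg_right (hgle _) (hζnonneg y (hφ0.trans hy.1.le))
      have step2 : (∫ y in Set.Ioc (φ u) u, ζ y) ≤ T := by
        rw [hTdef]
        refine MeasureTheory.setIntegral_mono_set hζ2 ?_ ?_
        · filter_upwards [MeasureTheory.ae_restrict_mem measurableSet_Ioi] with y hy
          exact hζnonneg y (hφ0.trans (le_of_lt hy))
        · exact (Set.Ioc_subset_Ioi_self).eventuallyLE
      calc (∫ y in Set.Ioc (φ u) u, g (u - y) * ζ y)
          ≤ ∫ y in Set.Ioc (φ u) u, G 0 * ζ y := step1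
        _ = G 0 * ∫ y in Set.Ioc (φ u) u, ζ y := MeasureTheory.integral_const_mul _ _
        _ ≤ G 0 * T := mul_le_mul_of_nonneg_left step2 (hGpos 0 le_rfl).le
    constructor
    · rw [hcongr, hsum, le_div_iff₀ hGu]
      calc A * G u = G u * A := mul_comm _ _
        _ ≤ ∫ y in Set.Icc 0 (φ u), g (u - y) * ζ y := hlow1
        _ ≤ _ := le_add_of_nonneg_right hpos2
    · rw [hcongr, hsum]
      have hnum : (∫ y in Set.Icc 0 (φ u), g (u - y) * ζ y) +
          (∫ y in Set.Ioc (φ u) u, g (u - y) * ζ y) ≤ G (u - φ u) * A + G 0 * T :=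
        add_le_add hup1 hup2
      calc ((∫ y in Set.Icc 0 (φ u), g (u - y) * ζ y) +
            ∫ y in Set.Ioc (φ u) u, g (u - y) * ζ y) / G u
          ≤ (G (u - φ u) * A + G 0 * T) / G u := by gcongr
        _ = G (u - φ u) / G u * A + G 0 * (T / G u) := by
            rw [add_div, mul_div_right_comm, mul_div_assoc]
    -- end key
  have hupper : Tendsto (fun u : ℝ =>
      G (u - φ u) / G u * (∫ y in Set.Icc 0 (φ u), ζ y) +
        G 0 * ((∫ y in Set.Ioi (φ u), ζ y) / G u)) atTop (nhds I) := by
    have := (hins.mul hA).add ((tendsto_const_nhds (x := G 0)).mul htail)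
    simpa using this
  exact tendsto_of_tendsto_of_tendsto_of_le_of_le' hA hupper
    (key.mono fun u h => h.1) (key.mono fun u h => h.2)
end
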